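/- Let p, q ≥ 3 be integers with 1/p + 1/q ≤ 1/2, and set C = p·(1/2 − 1/p − 1/q) = p/2 − 1 − p/q ≥ 0. Let g_{p,q} be the polynomial defined by: for q even with N = (q−2)/2, g_{p,q}(z) = 1 − (p−2)(z + z² + ⋯ + z^N) + z^{N+1}; for q odd with N = q−2, the same except that the coefficient of z^{(N+1)/2} is −(p−4). Then g_{p,q} has a real root x satisfying x ≥ 1 + (2q/(q−1))·C. -/
import Mathlib

-- Bernoulli-type inequality of order 2
lemma bern2 (s : ℝ) (hs : 0 ≤ s) : ∀ m : ℕ,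
    1 + (m:ℝ)*s + (m:ℝ)*((m:ℝ)-1)/2*s^2 ≤ (1+s)^m := by
  intro m
  induction m with
  | zero => norm_num
  | succ n ih =>
    have h1 : (0:ℝ) < 1 + s := by linarith
    have h2 : (0:ℝ) ≤ (n:ℝ)*((n:ℝ)-1) := by
      rcases Nat.eq_zero_or_pos n with h | h
      · simp [h]
      · have : (1:ℝ) ≤ (n:ℝ) := by exact_mod_cast h
        nlinarith
    have h3 : (1 + (n:ℝ)*s + (n:ℝ)*((n:ℝ)-1)/2*s^2) * (1+s) ≤ (1+s)^n * (1+s) :=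
      mul_le_mul_of_nonneg_right ih h1.le
    push_cast
    calc 1 + ((n:ℝ)+1)*s + ((n:ℝ)+1)*(((n:ℝ)+1)-1)/2*s^2
        ≤ (1 + (n:ℝ)*s + (n:ℝ)*((n:ℝ)-1)/2*s^2) * (1+s) := by
          nlinarith [mul_nonneg h2 (mul_nonneg hs (mul_nonneg hs hs))]
      _ ≤ (1+s)^n * (1+s) := h3
      _ = (1+s)^(n+1) := by ring

-- even-case polynomial certificate
lemma even_cert (a k : ℝ) (ha : 1 ≤ a) (hk : 1 ≤ k) (hw : 2 ≤ a*k) :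
    0 ≤ (a+4)*((a+2)*(2*k+1)^2 + 2*(k+1)*(a*k-2)*(2*k+1) + 2*k*(k+1)*(a*k-2)^2)
        - a*(a+2)*(2*k+1)^3 := by
  nlinarith [sq_nonneg (a*k-2), mul_nonneg (sub_nonneg.2 ha) (sub_nonneg.2 hk),
    mul_nonneg (mul_nonneg (sub_nonneg.2 ha) (sub_nonneg.2 hk)) (sub_nonneg.2 hw),
    sq_nonneg (a-1), sq_nonneg (k-1), mul_nonneg (sub_nonneg.2 hw) (sub_nonneg.2 ha),
    mul_nonneg (sub_nonneg.2 hw) (sub_nonneg.2 hk), sq_nonneg (a*k-2+a-k)]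

-- odd-case polynomial certificate
lemma odd_cert (a e S : ℝ) (ha : 1 ≤ a) (he : 2 ≤ e) (hS : S = a*(e-1) - 4) (hS0 : 0 ≤ S) :
    0 ≤ (a+4)*(2+S)^2 - 4*S*(2+S) - 4*e*a*(a+2) + 4*(a+1)*(a+4) := by
  subst hS
  nlinarith [mul_nonneg hS0 (sub_nonneg.2 ha), mul_nonneg hS0 (sub_nonneg.2 he),
    mul_nonneg (sub_nonneg.2 ha) (sub_nonneg.2 he), sq_nonneg (a*(e-1)-4),
    sq_nonneg (a-4), sq_nonneg (e-2)]

lemma even_key (a t s m : ℝ) (ha : 1 ≤ a) (hm : 2 ≤ m)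
    (ht : t*(2*m-1) = a+4) (hs : s*(2*m-1) = a*(2*m-1) - (a+4)) (hs0 : 0 ≤ s) :
    a + (a+1)*s ≤ t*(1 + m*s + m*(m-1)/2*s^2) := by
  have hd : (0:ℝ) < 2*m-1 := by linarith
  have hw : 2 ≤ a*(m-1) := by nlinarith [mul_nonneg hs0 hd.le]
  have texpr : t = (a+4)/(2*m-1) := by field_simp; linarith
  have sexpr : s = (a*(2*m-1) - (a+4))/(2*m-1) := by field_simp; linarith
  have key := even_cert a (m-1) ha (by linarith) hw
  rw [← sub_nonneg, texpr, sexpr]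
  have hid : (a+4)/(2*m-1)*(1 + m*((a*(2*m-1) - (a+4))/(2*m-1)) +
        m*(m-1)/2*((a*(2*m-1) - (a+4))/(2*m-1))^2)
      - (a + (a+1)*((a*(2*m-1) - (a+4))/(2*m-1)))
      = ((a+4)*((a+2)*(2*(m-1)+1)^2 + 2*((m-1)+1)*(a*(m-1)-2)*(2*(m-1)+1)
          + 2*(m-1)*((m-1)+1)*(a*(m-1)-2)^2) - a*(a+2)*(2*(m-1)+1)^3) / (2*m-1)^3 := by
    field_simp
    ring
  rw [hid]
  exact div_nonneg key (by positivity)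

lemma odd_key (a t s m u : ℝ) (ha : 1 ≤ a) (hm : 1 ≤ m)
    (ht : t*(2*m) = a+4) (hs : s*(2*m) = a*(2*m) - (a+4)) (hs0 : 0 ≤ s)
    (hu : 1 + m*s ≤ u) :
    a + (a+1)*s ≤ t*u^2 - 2*s*u := by
  have he : (0:ℝ) < 2*m := by linarith
  have ht0 : 0 < t := by nlinarith
  have hms : 0 ≤ m*s := by nlinarith
  have texpr : t = (a+4)/(2*m) := by field_simp; linarith
  have sexpr : s = (a*(2*m) - (a+4))/(2*m) := by field_simp; linarith
  have hS0 : 0 ≤ a*(2*m-1) - 4 := by nlinarith [mul_nonneg hs0 he.le]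
  have key := odd_cert a (2*m) (a*(2*m-1)-4) ha (by linarith) (by ring) hS0
  have step1 : a + (a+1)*s ≤ t*(1+m*s)^2 - 2*s*(1+m*s) := by
    rw [← sub_nonneg, texpr, sexpr]
    have hid : (a+4)/(2*m)*(1 + m*((a*(2*m) - (a+4))/(2*m)))^2
        - 2*((a*(2*m) - (a+4))/(2*m))*(1 + m*((a*(2*m) - (a+4))/(2*m)))
        - (a + (a+1)*((a*(2*m) - (a+4))/(2*m)))
        = ((a+4)*(2+(a*(2*m-1)-4))^2 - 4*(a*(2*m-1)-4)*(2+(a*(2*m-1)-4))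
            - 4*(2*m)*a*(a+2) + 4*(a+1)*(a+4)) / (4*(2*m)) := by
      field_simp
      ring
    rw [hid]
    exact div_nonneg key (by positivity)
  have h2 : 0 ≤ t*(u + (1+m*s)) - 2*s := by nlinarith [mul_le_mul_of_nonneg_left hu ht0.le]
  have h3 := mul_nonneg (sub_nonneg.2 hu) h2
  nlinarith [h3]

set_option maxHeartbeats 2000000 in
/-- the paper's Proposition 2: the denominator polynomial `g_{p,q}` of the
growth function of the non-positively curved `(p,q)`-regular tessellation has a real root
`x ≥ 1 + (2q/(q-1))·C`, where `C = p·(1/2 - 1/p - 1/q)`.  Here `N = (q-2)/2` for `q` even and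
`N = q-2` for `q` odd, and the coefficient of `z^l` (`1 ≤ l ≤ N`) in `g_{p,q}` is `-(p-2)`
except `-(p-4)` at `l = (N+1)/2` when `q` is odd. -/
theorem exists_root_ge_curvature_bound (p q : ℕ) (hp : 3 ≤ p) (hq : 3 ≤ q)
    (hpq : (1 : ℝ) / p + 1 / q ≤ 1 / 2)
    (C : ℝ) (hC : C = (p : ℝ) / 2 - 1 - (p : ℝ) / (q : ℝ))
    (N : ℕ) (hN : N = if Even q then (q - 2) / 2 else q - 2)
    (g : ℝ → ℝ)
    (hg : ∀ z, g z = 1 -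
        (∑ l ∈ Finset.Icc 1 N,
          (if ¬ Even q ∧ 2 * l = N + 1 then (p : ℝ) - 4 else (p : ℝ) - 2) * z ^ l)
        + z ^ (N + 1)) :
    ∃ x : ℝ, g x = 0 ∧ 1 + (2 * (q : ℝ) / ((q : ℝ) - 1)) * C ≤ x := by
  have hpR : (3:ℝ) ≤ (p:ℝ) := by exact_mod_cast hp
  have hqR : (3:ℝ) ≤ (q:ℝ) := by exact_mod_cast hq
  have hq1 : (1:ℝ) < (q:ℝ) := by linarith
  have hq0 : (0:ℝ) < (q:ℝ) := by linarith
  have hp0 : (0:ℝ) < (p:ℝ) := by linarith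
  have hqne : (q:ℝ) - 1 ≠ 0 := by linarith
  have hD : 2*(p:ℝ) + 2*(q:ℝ) ≤ (p:ℝ)*(q:ℝ) := by
    rw [div_add_div _ _ (ne_of_gt hp0) (ne_of_gt hq0),
      div_le_div_iff₀ (by positivity) (by norm_num)] at hpq
    nlinarith
  set B : ℝ := 1 + 2 * (q:ℝ) / ((q:ℝ) - 1) * C with hBdef
  have hB : B = ((p:ℝ) - 1) - ((p:ℝ)+2)/((q:ℝ)-1) := by
    rw [hBdef, hC]; field_simp; ring
  have hN1 : 1 ≤ N := by
    rcases Nat.even_or_odd q with h | h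
    · rw [hN, if_pos h]; rw [Nat.even_iff] at h; omega
    · rw [hN, if_neg (by rw [Nat.even_iff]; rw [Nat.odd_iff] at h; omega)]; omega
  have hB1 : 1 ≤ B := by
    rw [hB]
    have h : ((p:ℝ)+2)/((q:ℝ)-1) ≤ (p:ℝ)-2 := by
      rw [div_le_iff₀ (by linarith)]; nlinarith
    linarith
  -- Main step: g B ≤ 0
  have hgB : g B ≤ 0 := by
    by_cases hc : (p:ℝ)*(q:ℝ) = 2*(p:ℝ) + 2*(q:ℝ)
    · -- curvature zero: B = 1 and g 1 = 0
      have hBeq : B = 1 := by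
        rw [hB]
        have h : ((p:ℝ)+2)/((q:ℝ)-1) = (p:ℝ)-2 := by
          rw [div_eq_iff (by linarith)]; nlinarith
        rw [h]; ring
      have hcN : p * q = 2*p + 2*q := by exact_mod_cast hc
      have hp6 : p ≤ 6 := by nlinarith
      have hq6 : q ≤ 6 := by nlinarith
      rw [hBeq, hg 1]
      have : (1:ℝ) -
          (∑ l ∈ Finset.Icc 1 N,
            (if ¬ Even q ∧ 2 * l = N + 1 then (p : ℝ) - 4 else (p : ℝ) - 2) * 1 ^ l)
          + 1 ^ (N + 1) = 0 := by
        interval_cases p <;> interval_cases q <;> first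
          | omega
          | (subst hN; norm_num [Finset.sum_Icc_succ_top, Nat.even_iff])
      linarith [this]
    · -- curvature strictly negative: B > 1
      have hlt : 2*(p:ℝ) + 2*(q:ℝ) < (p:ℝ)*(q:ℝ) := lt_of_le_of_ne hD (Ne.symm hc)
      have hspos : 0 < B - 1 := by
        rw [hB]
        have h : ((p:ℝ)+2)/((q:ℝ)-1) < (p:ℝ)-2 := by
          rw [div_lt_iff₀ (by linarith)]; nlinarith
        linarith
      set t : ℝ := ((p:ℝ)+2)/((q:ℝ)-1) with htdef
      have htq : t * ((q:ℝ)-1) = (p:ℝ)+2 := div_mul_cancel₀ _ hqne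
      have hBt : B + t = (p:ℝ) - 1 := by rw [hB]; ring
      have hsq : (B-1) * ((q:ℝ)-1) = ((p:ℝ)-2)*((q:ℝ)-1) - ((p:ℝ)+2) := by
        rw [hB]; linear_combination (-1:ℝ)*htq
      have ht0 : 0 < t := by rw [htdef]; exact div_pos (by linarith) (by linarith)
      have hgeom : (∑ l ∈ Finset.Icc 1 N, B^l) * (B - 1) = B^(N+1) - B := by
        have hins : Finset.range (N+1) = insert 0 (Finset.Icc 1 N) := by
          ext x; simp [Nat.lt_succ_iff]; omega
        have h := geom_sum_mul B (N+1)
        rw [hins, Finset.sum_insert (by simp)] at h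
        linear_combination h
      rcases Nat.even_or_odd q with hqe | hqo
      · -- EVEN q
        obtain ⟨m, hm⟩ := hqe
        have hm2 : 2 ≤ m := by omega
        have hNm : N + 1 = m := by rw [hN, if_pos ⟨m, hm⟩]; omega
        have hqm : (q:ℝ) = 2*(m:ℝ) := by rw [hm]; push_cast; ring
        have hmR : (2:ℝ) ≤ (m:ℝ) := by exact_mod_cast hm2
        have ht2 : t * (2*(m:ℝ)-1) = ((p:ℝ)-2)+4 := by
          have h : (2*(m:ℝ)-1) = (q:ℝ)-1 := by rw [hqm]
          rw [h, htq]; ring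
        have hs2 : (B-1) * (2*(m:ℝ)-1) = ((p:ℝ)-2)*(2*(m:ℝ)-1) - (((p:ℝ)-2)+4) := by
          have h : (2*(m:ℝ)-1) = (q:ℝ)-1 := by rw [hqm]
          rw [h, hsq]; ring
        have key := even_key ((p:ℝ)-2) t (B-1) (m:ℝ) (by linarith) hmR ht2 hs2 (by linarith)
        have hbern := bern2 (B-1) (by linarith) m
        have h6 : ((p:ℝ)-2) + ((p:ℝ)-1)*(B-1) ≤ t * B^m := by
          have h7 := mul_le_mul_of_nonneg_left hbern ht0.le
          have hBs : (1 + (B-1)) = B := by ring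
          rw [hBs] at h7
          calc ((p:ℝ)-2) + ((p:ℝ)-1)*(B-1)
              = ((p:ℝ)-2) + (((p:ℝ)-2)+1)*(B-1) := by ring
            _ ≤ t*(1 + (m:ℝ)*(B-1) + (m:ℝ)*((m:ℝ)-1)/2*(B-1)^2) := key
            _ ≤ t * B^m := h7
        have hcoefs : (∑ l ∈ Finset.Icc 1 N,
            (if ¬ Even q ∧ 2*l = N+1 then (p:ℝ)-4 else (p:ℝ)-2) * B^l)
            = ((p:ℝ)-2) * ∑ l ∈ Finset.Icc 1 N, B^l := by
          rw [Finset.mul_sum]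
          apply Finset.sum_congr rfl
          intro l _
          rw [if_neg]
          rintro ⟨h1, _⟩
          exact h1 ⟨m, hm⟩
        have e1 : g B = 1 - ((p:ℝ)-2) * (∑ l ∈ Finset.Icc 1 N, B^l) + B^(N+1) := by
          rw [hg B, hcoefs]
        have e3 : g B * (B-1) = ((p:ℝ)-1)*B - 1 - t*B^(N+1) := by
          rw [e1]
          linear_combination (-((p:ℝ)-2))*hgeom + (B^(N+1))*hBt
        have hfinal : g B * (B-1) ≤ 0 := by
          rw [e3, hNm]
          nlinarith [h6]
        nlinarith [hfinal, hspos]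
      · -- ODD q
        have hqo' : ¬ Even q := by
          rw [Nat.even_iff]; rw [Nat.odd_iff] at hqo; omega
        obtain ⟨m, hm⟩ := hqo
        have hm1 : 1 ≤ m := by omega
        have hNm1 : N + 1 = 2*m := by rw [hN, if_neg hqo']; omega
        have hqm : (q:ℝ) = 2*(m:ℝ)+1 := by rw [hm]; push_cast; ring
        have hmR : (1:ℝ) ≤ (m:ℝ) := by exact_mod_cast hm1
        have ht2 : t * (2*(m:ℝ)) = ((p:ℝ)-2)+4 := by
          have h : (2*(m:ℝ)) = (q:ℝ)-1 := by rw [hqm]; ring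
          rw [h, htq]; ring
        have hs2 : (B-1) * (2*(m:ℝ)) = ((p:ℝ)-2)*(2*(m:ℝ)) - (((p:ℝ)-2)+4) := by
          have h : (2*(m:ℝ)) = (q:ℝ)-1 := by rw [hqm]; ring
          rw [h, hsq]; ring
        have hu : 1 + (m:ℝ)*(B-1) ≤ B^m := by
          have h := one_add_mul_le_pow (show (-2:ℝ) ≤ B-1 by linarith) m
          have hBs : (1 + (B-1)) = B := by ring
          rwa [hBs] at h
        have key := odd_key ((p:ℝ)-2) t (B-1) (m:ℝ) (B^m) (by linarith) hmR ht2 hs2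
          (by linarith) hu
        have hsumodd : (∑ l ∈ Finset.Icc 1 N,
            (if ¬ Even q ∧ 2*l = N+1 then (p:ℝ)-4 else (p:ℝ)-2) * B^l)
            = ((p:ℝ)-2) * (∑ l ∈ Finset.Icc 1 N, B^l) - 2*B^m := by
          have hmem : m ∈ Finset.Icc 1 N := by simp [Finset.mem_Icc]; omega
          have hcong : ∀ l ∈ Finset.Icc 1 N,
              (if ¬ Even q ∧ 2*l = N+1 then (p:ℝ)-4 else (p:ℝ)-2) * B^l
              = ((p:ℝ)-2) * B^l + (if l = m then (-2) * B^l else 0) := by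
            intro l _
            by_cases hl : l = m
            · rw [if_pos ⟨hqo', by omega⟩, if_pos hl]; ring
            · rw [if_neg (by rintro ⟨_, h2⟩; omega), if_neg hl]; ring
          rw [Finset.sum_congr rfl hcong, Finset.sum_add_distrib,
            Finset.sum_ite_eq' _ m, if_pos hmem, Finset.mul_sum]
          rw [← Finset.mul_sum]; ring
        have e1 : g B = 1 - (((p:ℝ)-2) * (∑ l ∈ Finset.Icc 1 N, B^l) - 2*B^m) + B^(N+1) := by
          rw [hg B, hsumodd]
        have e3 : g B * (B-1) = ((p:ℝ)-1)*B - 1 + 2*B^m*(B-1) - t*B^(N+1) := by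
          rw [e1]
          linear_combination (-((p:ℝ)-2))*hgeom + (B^(N+1))*hBt
        have hfinal : g B * (B-1) ≤ 0 := by
          rw [e3]
          have hpow : B^(N+1) = (B^m)^2 := by
            rw [← pow_mul]; congr 1; omega
          rw [hpow]
          nlinarith [key]
        nlinarith [hfinal, hspos]
  -- conclude by the intermediate value theorem on [B, M]
  set M : ℝ := max B ((p:ℝ)*(N:ℝ) + 1) with hMdef
  have hM1 : (1:ℝ) ≤ M := by
    have h0 : (0:ℝ) ≤ (p:ℝ)*(N:ℝ) := by positivity
    have := le_max_right B ((p:ℝ)*(N:ℝ) + 1)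
    linarith
  have hMp : (p:ℝ)*(N:ℝ) + 1 ≤ M := le_max_right _ _
  have hgM : 0 ≤ g M := by
    rw [hg M]
    have hsum : ∑ l ∈ Finset.Icc 1 N,
        (if ¬ Even q ∧ 2 * l = N + 1 then (p : ℝ) - 4 else (p : ℝ) - 2) * M ^ l
        ≤ (N:ℝ) * (((p:ℝ)-2) * M^N) := by
      calc _ ≤ ∑ l ∈ Finset.Icc 1 N, ((p:ℝ)-2) * M^N := by
              apply Finset.sum_le_sum
              intro l hl
              have hlN : l ≤ N := (Finset.mem_Icc.1 hl).2
              have h1 : (if ¬ Even q ∧ 2 * l = N + 1 then (p : ℝ) - 4 else (p : ℝ) - 2)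
                  ≤ (p:ℝ) - 2 := by split <;> [linarith; linarith]
              have h2 : M^l ≤ M^N := pow_le_pow_right₀ hM1 hlN
              have h3 : (0:ℝ) ≤ M^l := by positivity
              have h4 : (0:ℝ) ≤ (p:ℝ) - 2 := by linarith
              exact mul_le_mul h1 h2 h3 h4
        _ = (N:ℝ) * (((p:ℝ)-2) * M^N) := by
              rw [Finset.sum_const, Nat.card_Icc]; simp
    have hMN : (0:ℝ) ≤ M^N := by positivity
    have hNp : (N:ℝ)*((p:ℝ)-2) ≤ M := by
      have h5 : (0:ℝ) ≤ (N:ℝ) := by positivity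
      nlinarith
    have h8 : (N:ℝ) * (((p:ℝ)-2) * M^N) ≤ M^(N+1) := by
      rw [pow_succ']
      nlinarith
    linarith
  have hcont : Continuous g := by
    have h9 : g = fun z => 1 -
        (∑ l ∈ Finset.Icc 1 N,
          (if ¬ Even q ∧ 2 * l = N + 1 then (p : ℝ) - 4 else (p : ℝ) - 2) * z ^ l)
        + z ^ (N + 1) := funext hg
    rw [h9]
    exact (continuous_const.sub (continuous_finset_sum _ fun i _ =>
      continuous_const.mul (continuous_pow i))).add (continuous_pow (N+1))
  have hBM : B ≤ M := le_max_left _ _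
  have h0 : (0:ℝ) ∈ Set.Icc (g B) (g M) := ⟨hgB, hgM⟩
  obtain ⟨x, hx, hgx⟩ := intermediate_value_Icc hBM hcont.continuousOn h0
  exact ⟨x, hgx, hx.1⟩
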